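/- Suppose γ = 1/2 + α_m − α_f (the second-order accuracy condition) and α_m ≠ 0. Then there exist ε > 0 and a function μ : (−ε, ε) → ℝ such that for every z ∈ (−ε, ε), μ(z) is an eigenvalue of the amplification matrix M(z) (i.e. det(M(z) − μ(z)·I) = 0), and μ(z) − e^z = O(z³) as z → 0; i.e. the principal root of the generalized-α method matches the exact amplification e^z to second order. -/

import Mathlib

open Filter


open Asymptotics

lemma exp_taylor2_isBigO :
    (fun x : ℝ => Real.exp x - (1 + x + x^2/2)) =O[nhds 0] fun x => x^3 := by
  apply IsBigO.of_bound 1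
  have h : ∀ᶠ x : ℝ in nhds 0, |x| ≤ 1 := by
    filter_upwards [Metric.ball_mem_nhds (0:ℝ) one_pos] with x hx
    rw [Metric.mem_ball, Real.dist_eq, sub_zero] at hx
    exact hx.le
  filter_upwards [h] with x hx
  have := Real.exp_bound hx (n := 3) (by norm_num)
  simp only [Finset.sum_range_succ, Finset.sum_range_zero] at this
  rw [Real.norm_eq_abs, Real.norm_eq_abs, one_mul, abs_pow]
  calc |Real.exp x - (1 + x + x^2/2)| ≤ |x|^3 * (4/(6*3)) := by
        convert this using 2 <;> norm_num
    _ ≤ |x|^3 := by nlinarith [abs_nonneg x, pow_nonneg (abs_nonneg x) 3]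

lemma exp_taylor2_isBigO' :
    (fun x : ℝ => Real.exp (2*x) - (1 + 2*x + 2*x^2)) =O[nhds 0] fun x => x^3 := by
  have ht : Tendsto (fun x : ℝ => 2*x) (nhds 0) (nhds 0) := by
    have : Continuous (fun x : ℝ => 2*x) := by continuity
    simpa using this.tendsto 0
  have h := exp_taylor2_isBigO.comp_tendsto ht
  have h2 : (fun x : ℝ => Real.exp (2*x) - (1 + 2*x + 2*x^2))
      =O[nhds 0] fun x => (2*x)^3 := by
    apply h.congr <;> intro x <;> simp [Function.comp] <;> ring
  exact h2.trans (by
    apply IsBigO.of_bound 8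
    filter_upwards with x
    rw [Real.norm_eq_abs, Real.norm_eq_abs, abs_pow, abs_pow, abs_mul, abs_two]
    nlinarith [abs_nonneg x, pow_nonneg (abs_nonneg x) 3])

/-- Analytic part: existence of the principal root of the characteristic
quadratic, with second-order accuracy. -/
lemma genAlpha_aux (αf αm γ : ℝ) (hacc : γ = 1 / 2 + αm - αf) (hαm : αm ≠ 0) :
    ∃ ε > 0, ∃ μ : ℝ → ℝ,
      (∀ z ∈ Set.Ioo (-ε) ε, (αm - γ * αf * z) ≠ 0 ∧
        (αm - γ * αf * z) * μ z ^ 2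
          - (αm - γ * αf * z + γ * z + z * αf * (1 - γ) - (1 - αm)) * μ z
          + (z * αf * (1 - γ) - (1 - αm) - z * (1 - γ)) = 0)
      ∧ (fun z => μ z - Real.exp z) =O[nhds 0] fun z => z ^ 3 := by
  set Dz : ℝ → ℝ := fun z => αm - γ * αf * z with hDzdef
  set Bf : ℝ → ℝ := fun z => αm - γ * αf * z + γ * z + z * αf * (1 - γ) - (1 - αm) with hBfdef
  set Cf : ℝ → ℝ := fun z => z * αf * (1 - γ) - (1 - αm) - z * (1 - γ) with hCfdef
  set dsc : ℝ → ℝ := fun z => Bf z ^ 2 - 4 * Dz z * Cf z with hdscdef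
  set μ : ℝ → ℝ := fun z => (Bf z + Real.sqrt (dsc z)) / (2 * Dz z) with hμdef
  set G : ℝ → ℝ := fun z => Dz z * (μ z + Real.exp z) - Bf z with hGdef
  have hDc : Continuous Dz := by rw [hDzdef]; continuity
  have hBc : Continuous Bf := by rw [hBfdef]; continuity
  have hCc : Continuous Cf := by rw [hCfdef]; continuity
  have hdc : Continuous dsc := by
    rw [hdscdef]; exact (hBc.pow 2).sub ((continuous_const.mul hDc).mul hCc)
  have hD0 : Dz 0 = αm := by simp [hDzdef]
  have hB0 : Bf 0 = 2 * αm - 1 := by simp [hBfdef]; ring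
  have hC0 : Cf 0 = αm - 1 := by simp [hCfdef]
  have hd0 : dsc 0 = 1 := by rw [hdscdef]; simp only; rw [hB0, hC0, hD0]; ring
  have hμ0 : μ 0 = 1 := by
    rw [hμdef]; simp only; rw [hd0, Real.sqrt_one, hB0, hD0]; field_simp; ring
  have hG0 : G 0 = 1 := by rw [hGdef]; simp only; rw [hD0, hμ0, hB0, Real.exp_zero]; ring
  have hμc : ContinuousAt μ 0 := by
    rw [hμdef]
    apply ContinuousAt.div
    · exact (hBc.continuousAt).add ((Real.continuous_sqrt.comp hdc).continuousAt)
    · exact (continuous_const.mul hDc).continuousAt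
    · rw [hD0]; simpa using hαm
  have hGc : ContinuousAt G 0 := by
    rw [hGdef]
    exact (hDc.continuousAt.mul (hμc.add Real.continuous_exp.continuousAt)).sub
      hBc.continuousAt
  have h1 : ∀ᶠ z in nhds (0:ℝ), Dz z ≠ 0 := by
    apply hDc.continuousAt.eventually_ne
    rw [hD0]; exact hαm
  have h2 : ∀ᶠ z in nhds (0:ℝ), 0 < dsc z := by
    have := hdc.continuousAt (x := 0)
    rw [ContinuousAt, hd0] at this
    exact this.eventually (eventually_gt_nhds zero_lt_one)
  have h3 : ∀ᶠ z in nhds (0:ℝ), G z ≠ 0 := by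
    apply hGc.eventually_ne
    rw [hG0]; exact one_ne_zero
  -- quadratic satisfied by μ
  have hqz : ∀ z : ℝ, Dz z ≠ 0 → 0 < dsc z →
      Dz z * μ z ^ 2 - Bf z * μ z + Cf z = 0 := by
    intro z hD hd
    have hs : Real.sqrt (dsc z) ^ 2 = Bf z ^ 2 - 4 * Dz z * Cf z := by
      rw [Real.sq_sqrt hd.le, hdscdef]
    rw [hμdef]; simp only
    field_simp
    linear_combination hs
  -- the eventual identity for μ - exp
  have heq : ∀ᶠ z in nhds (0:ℝ), μ z - Real.exp z
      = (Dz z * Real.exp z ^ 2 - Bf z * Real.exp z + Cf z) * (-(G z)⁻¹) := by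
    filter_upwards [h1, h2, h3] with z hD hd hG0'
    have hq := hqz z hD hd
    rw [mul_comm, neg_mul, inv_mul_eq_div, neg_div', eq_div_iff hG0']
    simp only [hGdef]
    linear_combination hq
  -- big-O of the defect F
  have hDO : (fun z : ℝ => Dz z) =O[nhds 0] (fun _ => (1:ℝ)) :=
    (hDc.tendsto 0).isBigO_one ℝ
  have hBO : (fun z : ℝ => Bf z) =O[nhds 0] (fun _ => (1:ℝ)) :=
    (hBc.tendsto 0).isBigO_one ℝ
  have key : ∀ z : ℝ, Dz z * Real.exp z ^ 2 - Bf z * Real.exp z + Cf z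
      = Dz z * (Real.exp (2*z) - (1 + 2*z + 2*z^2))
        - Bf z * (Real.exp z - (1 + z + z^2/2))
        + (αf^2 - αf*αm - αf/2 - αm/2 - 1/4) * z^3 := by
    intro z
    have h2z : Real.exp (2*z) = Real.exp z ^ 2 := by
      rw [two_mul, Real.exp_add]; ring
    rw [h2z]
    simp only [hDzdef, hBfdef, hCfdef]
    rw [hacc]; ring
  have t1 : (fun z : ℝ => Dz z * (Real.exp (2*z) - (1 + 2*z + 2*z^2)))
      =O[nhds 0] fun z => z^3 := by
    have := hDO.mul exp_taylor2_isBigO'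
    simpa using this
  have t2 : (fun z : ℝ => Bf z * (Real.exp z - (1 + z + z^2/2)))
      =O[nhds 0] fun z => z^3 := by
    have := hBO.mul exp_taylor2_isBigO
    simpa using this
  have t3 : (fun z : ℝ => (αf^2 - αf*αm - αf/2 - αm/2 - 1/4) * z^3)
      =O[nhds 0] fun z => z^3 := isBigO_const_mul_self _ _ _
  have hFO : (fun z : ℝ => Dz z * Real.exp z ^ 2 - Bf z * Real.exp z + Cf z)
      =O[nhds 0] fun z => z^3 := by
    refine ((t1.sub t2).add t3).congr_left fun z => ?_
    rw [key z]
  have hGinvO : (fun z : ℝ => -(G z)⁻¹) =O[nhds 0] (fun _ => (1:ℝ)) := by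
    have : ContinuousAt (fun z : ℝ => -(G z)⁻¹) 0 := (hGc.inv₀ (by rw [hG0]; exact one_ne_zero)).neg
    exact this.tendsto.isBigO_one ℝ
  have hbigO : (fun z => μ z - Real.exp z) =O[nhds 0] fun z => z ^ 3 := by
    have heq' : (fun z => μ z - Real.exp z) =ᶠ[nhds 0]
        fun z => (Dz z * Real.exp z ^ 2 - Bf z * Real.exp z + Cf z) * (-(G z)⁻¹) := heq
    refine heq'.trans_isBigO ?_
    have := hFO.mul hGinvO
    simpa using this
  -- extract ε
  have hcomb := h1.and h2
  rw [Metric.eventually_nhds_iff] at hcomb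
  obtain ⟨ε, hε, hball⟩ := hcomb
  refine ⟨ε, hε, μ, fun z hz => ?_, hbigO⟩
  have hzd : dist z 0 < ε := by
    rw [Real.dist_eq, sub_zero]
    exact abs_lt.mpr ⟨hz.1, hz.2⟩
  obtain ⟨hD, hd⟩ := hball hzd
  refine ⟨hD, ?_⟩
  have := hqz z hD hd
  simp only [hDzdef, hBfdef, hCfdef] at this
  exact this

/-- Second-order accuracy of the generalized-α method: under the accuracy condition
`γ = 1/2 + α_m − α_f` (and `α_m ≠ 0`), the amplification matrix `M(z)` of the method
applied to `φ̇ = λφ` (with `z = λΔt`) has, for all sufficiently small `z`, an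
eigenvalue `μ(z)` matching the exact amplification factor `e^z` to second order:
`μ(z) − e^z = O(z³)` as `z → 0`. The matrix `M(z)` sends the state
`(φ_n, Δt φ̇_n)` to `(φ_{n+1}, Δt φ̇_{n+1})`, characterized by the two linear
equations of the scheme whenever `α_m − γ α_f z ≠ 0`. -/
theorem genAlpha_second_order_accuracy
    (αf αm γ : ℝ) (hacc : γ = 1 / 2 + αm - αf) (hαm : αm ≠ 0)
    (M : ℝ → Matrix (Fin 2) (Fin 2) ℝ)
    (hM : ∀ z : ℝ, αm - γ * αf * z ≠ 0 → ∀ v : Fin 2 → ℝ,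
      αm * ((M z).mulVec v 1)
          = z * (1 - αf) * v 0 + z * αf * ((M z).mulVec v 0) - (1 - αm) * v 1
        ∧ (M z).mulVec v 0 = v 0 + (1 - γ) * v 1 + γ * ((M z).mulVec v 1)) :
    ∃ ε > 0, ∃ μ : ℝ → ℝ,
      (∀ z ∈ Set.Ioo (-ε) ε, ((M z) - μ z • (1 : Matrix (Fin 2) (Fin 2) ℝ)).det = 0)
        ∧ (fun z => μ z - Real.exp z) =O[nhds (0 : ℝ)] fun z => z ^ 3 := by
  obtain ⟨ε, hε, μ, hquad, hO⟩ := genAlpha_aux αf αm γ hacc hαm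
  refine ⟨ε, hε, μ, fun z hz => ?_, hO⟩
  obtain ⟨hD, hq⟩ := hquad z hz
  obtain ⟨e1, e2⟩ := hM z hD ![1, 0]
  obtain ⟨e3, e4⟩ := hM z hD ![0, 1]
  simp [Matrix.mulVec, dotProduct, Fin.sum_univ_two] at e1 e2 e3 e4
  have h10 : (αm - γ * αf * z) * M z 1 0 = z := by
    linear_combination e1 + z * αf * e2
  have h11 : (αm - γ * αf * z) * M z 1 1 = z * αf * (1 - γ) - (1 - αm) := by
    linear_combination e3 + z * αf * e4
  have hdet : ((M z) - μ z • (1 : Matrix (Fin 2) (Fin 2) ℝ)).det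
      = (M z 0 0 - μ z) * (M z 1 1 - μ z) - M z 0 1 * M z 1 0 := by
    rw [Matrix.det_fin_two]
    simp [Matrix.sub_apply, Matrix.smul_apply, Matrix.one_apply]
  rw [hdet, e2, e4]
  have key : (αm - γ * αf * z) ^ 2 *
      ((1 + γ * M z 1 0 - μ z) * (M z 1 1 - μ z)
        - (1 - γ + γ * M z 1 1) * M z 1 0) = 0 := by
    linear_combination (αm - γ * αf * z) * hq
      + (-(γ * (αm - γ * αf * z) * μ z) - (1 - γ) * (αm - γ * αf * z)
          + γ * ((αm - γ * αf * z) * M z 1 1 - (αm - γ * αf * z) * μ z)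
          - γ * ((αm - γ * αf * z) * M z 1 1) + γ * (αm - γ * αf * z) * μ z) * h10
      + ((αm - γ * αf * z) - (αm - γ * αf * z) * μ z) * h11
  rcases mul_eq_zero.mp key with h | h
  · exact absurd h (pow_ne_zero 2 hD)
  · exact h
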